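/- The left Kan extension along j : Δ_inert → Δ of the terminal presheaf 1 : Δ_inert^op → Set is isomorphic to the nerve of Bℕ, the one-object category with endomorphism monoid (ℕ,+); in particular j_!(1)_k ≅ ℕ^k, via sending an active map α : [k] → [n] to the tuple of successive differences. -/

import Mathlib

/-! Preliminaries: the active-inert factorization system on the simplex
category, the inert subcategory `Δ_inert`, the one-object category `Bℕ`,
twisted arrow categories, and the explicit free decomposition space formula,
following Hackney–Kock, "Free decomposition spaces". -/

open CategoryTheory SimplexCategory

namespace FreeDecompPaper

/-- A map in the simplex category is *active* if it preserves endpoints: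
`f 0 = 0` and `f (last) = last`. -/
def IsActive {x y : SimplexCategory} (f : x ⟶ y) : Prop :=
  f.toOrderHom 0 = 0 ∧ f.toOrderHom (Fin.last x.len) = Fin.last y.len

/-- A map in the simplex category is *inert* (distance-preserving) if
`f (i+1) = f i + 1` for all `i`. -/
def IsInert {x y : SimplexCategory} (f : x ⟶ y) : Prop :=
  ∀ i : Fin x.len, (f.toOrderHom i.succ : ℕ) = (f.toOrderHom i.castSucc : ℕ) + 1

lemma isInert_id (x : SimplexCategory) : IsInert (𝟙 x) := by intro i; simp

lemma isInert_from_zero {n : ℕ} (f : mk 0 ⟶ mk n) : IsInert f := fun i => i.elim0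

lemma isInert_comp {x y z : SimplexCategory} {f : x ⟶ y} {g : y ⟶ z}
    (hf : IsInert f) (hg : IsInert g) : IsInert (f ≫ g) := by
  intro i
  have key : ∀ a b : Fin (y.len + 1), (b : ℕ) = (a : ℕ) + 1 →
      (g.toOrderHom b : ℕ) = (g.toOrderHom a : ℕ) + 1 := by
    intro a b hab
    have ha : (a : ℕ) < y.len := by have := b.isLt; omega
    have e1 : (⟨(a : ℕ), ha⟩ : Fin y.len).castSucc = a := by ext; simp
    have e2 : (⟨(a : ℕ), ha⟩ : Fin y.len).succ = b := by ext; simp; omega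
    have := hg ⟨(a : ℕ), ha⟩
    rw [e1, e2] at this
    exact this
  simpa using key _ _ (hf i)

lemma isActive_id (x : SimplexCategory) : IsActive (𝟙 x) := by
  constructor <;> simp

lemma isActive_comp {x y z : SimplexCategory} {f : x ⟶ y} {g : y ⟶ z}
    (hf : IsActive f) (hg : IsActive g) : IsActive (f ≫ g) := by
  constructor
  · show g.toOrderHom (f.toOrderHom 0) = 0
    rw [hf.1, hg.1]
  · show g.toOrderHom (f.toOrderHom (Fin.last x.len)) = Fin.last z.len
    rw [hf.2, hg.2]

/-- The inert map `ρᵢ : [1] → [k]` with image `{i, i+1}` (0-indexed vertices;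
in the 1-indexed labelling of the paper its image is `{i-1, i}`). -/
def rho (k : ℕ) (i : Fin k) : mk 1 ⟶ mk k :=
  mkHom ⟨fun j => ⟨(i : ℕ) + (j : ℕ), by have := i.isLt; have := j.isLt; omega⟩,
    fun a b h => by
      simp only [Fin.mk_le_mk]
      have : (a : ℕ) ≤ (b : ℕ) := h
      omega⟩

/-- The vertex map `[0] → [k]` picking out the vertex `j`. -/
def vtx (k : ℕ) (j : Fin (k + 1)) : mk 0 ⟶ mk k :=
  mkHom ⟨fun _ => j, fun _ _ _ => le_refl _⟩

/-- The unique active map `[1] → [k]`. -/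
def mu (k : ℕ) : mk 1 ⟶ mk k :=
  mkHom ⟨fun j => ⟨(j : ℕ) * k, by
      have hj : (j : ℕ) ≤ 1 := by have := j.isLt; omega
      have : (j : ℕ) * k ≤ 1 * k := Nat.mul_le_mul_right k hj
      omega⟩,
    fun a b h => by
      simp only [Fin.mk_le_mk]
      exact Nat.mul_le_mul_right k h⟩

lemma isActive_mu (k : ℕ) : IsActive (mu k) := by
  constructor
  · ext
    show ((0 : Fin 2) : ℕ) * k = ((0 : Fin (k+1)) : ℕ)
    simp
  · ext
    show ((Fin.last 1 : Fin 2) : ℕ) * k = ((Fin.last k : Fin (k+1)) : ℕ)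
    simp [Fin.last]

/-- Iterated bottom coface `(d⊥)^a : [m] → [m+a]`, where `d⊥ = δ 0 : i ↦ i+1`. -/
def dBotPow (m : ℕ) : (a : ℕ) → (mk m ⟶ mk (m + a))
  | 0 => 𝟙 _
  | a + 1 => dBotPow m a ≫ δ (0 : Fin (m + a + 2))

/-- Iterated top coface `(d⊤)^b : [m] → [m+b]`, where `d⊤ = δ (last) : i ↦ i`. -/
def dTopPow (m : ℕ) : (b : ℕ) → (mk m ⟶ mk (m + b))
  | 0 => 𝟙 _
  | b + 1 => dTopPow m b ≫ δ (Fin.last (m + b + 1))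

lemma isInert_dBot (m : ℕ) : IsInert (δ (0 : Fin (m + 2)) : mk m ⟶ mk (m + 1)) := by
  intro i
  show ((0 : Fin (m+2)).succAbove i.succ : ℕ) = ((0 : Fin (m+2)).succAbove i.castSucc : ℕ) + 1
  rw [Fin.succAbove_of_le_castSucc _ _ (by simp [Fin.le_def]),
    Fin.succAbove_of_le_castSucc _ _ (by simp [Fin.le_def])]
  simp

lemma isInert_dTop (m : ℕ) : IsInert (δ (Fin.last (m + 1)) : mk m ⟶ mk (m + 1)) := by
  intro i
  show ((Fin.last (m+1)).succAbove i.succ : ℕ) = ((Fin.last (m+1)).succAbove i.castSucc : ℕ) + 1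
  have hi : (i : ℕ) < m := by have := i.isLt; simpa [SimplexCategory.len_mk] using this
  rw [Fin.succAbove_of_castSucc_lt _ _ (by
      simp only [Fin.lt_def, Fin.coe_castSucc, Fin.val_succ, Fin.val_last]; omega),
    Fin.succAbove_of_castSucc_lt _ _ (by
      simp only [Fin.lt_def, Fin.coe_castSucc, Fin.val_last]; omega)]
  simp

lemma isInert_dBotPow (m a : ℕ) : IsInert (dBotPow m a) := by
  induction a with
  | zero => exact isInert_id _
  | succ a ih => exact isInert_comp ih (isInert_dBot _)

lemma isInert_dTopPow (m b : ℕ) : IsInert (dTopPow m b) := by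
  induction b with
  | zero => exact isInert_id _
  | succ b ih => exact isInert_comp ih (isInert_dTop _)

/-- The subcategory `Δ_inert` of the simplex category: objects are natural
numbers `n` (standing for the ordinal `[n]`), and morphisms `m ⟶ n` are the
inert maps `[m] → [n]`. -/
structure InertCat where
  n : ℕ

instance : Category InertCat where
  Hom x y := {f : mk x.n ⟶ mk y.n // IsInert f}
  id x := ⟨𝟙 _, isInert_id _⟩
  comp f g := ⟨f.1 ≫ g.1, isInert_comp f.2 g.2⟩
  id_comp f := by apply Subtype.ext; simp
  comp_id f := by apply Subtype.ext; simp
  assoc f g h := by apply Subtype.ext; simp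

/-- The inclusion `j : Δ_inert → Δ`. -/
def jF : InertCat ⥤ SimplexCategory where
  obj x := mk x.n
  map f := f.1
  map_id _ := rfl
  map_comp _ _ := rfl

/-- The top vertex `[0] → [m]` as a morphism of `Δ_inert`. -/
def topV (m : ℕ) : (⟨0⟩ : InertCat) ⟶ ⟨m⟩ :=
  ⟨vtx m (Fin.last m), isInert_from_zero _⟩

/-- The bottom vertex `[0] → [m]` as a morphism of `Δ_inert`. -/
def botV (m : ℕ) : (⟨0⟩ : InertCat) ⟶ ⟨m⟩ :=
  ⟨vtx m 0, isInert_from_zero _⟩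

/-- The outer coface `d⊥ : [0] → [1]` (omitting `0`) as a morphism of `Δ_inert`. -/
def dBotI : (⟨0⟩ : InertCat) ⟶ ⟨1⟩ := ⟨δ (0 : Fin 2), isInert_from_zero _⟩

/-- The outer coface `d⊤ : [0] → [1]` (omitting the top) as a morphism of `Δ_inert`. -/
def dTopI : (⟨0⟩ : InertCat) ⟶ ⟨1⟩ := ⟨δ (1 : Fin 2), isInert_from_zero _⟩

/-- The category with objects `ℕ` and morphisms `m ⟶ n` the pairs `(a,b)`
with `a + m + b = n`, composed by componentwise addition. -/
structure NPairCat where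
  n : ℕ

instance : Category NPairCat where
  Hom x y := {p : ℕ × ℕ // p.1 + x.n + p.2 = y.n}
  id x := ⟨(0, 0), by omega⟩
  comp f g := ⟨(f.1.1 + g.1.1, f.1.2 + g.1.2), by have h1 := f.2; have h2 := g.2; omega⟩
  id_comp f := by apply Subtype.ext; obtain ⟨⟨a, b⟩, h⟩ := f; simp
  comp_id f := by apply Subtype.ext; obtain ⟨⟨a, b⟩, h⟩ := f; simp
  assoc f g h := by apply Subtype.ext; simp; omega

/-- The one-object category `Bℕ` with endomorphism monoid `(ℕ,+)`. -/
abbrev BN := SingleObj (Multiplicative ℕ)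

/-- The twisted arrow category of a category `C`: objects are arrows of `C`,
and a morphism from `f'` to `f` is a pair `(a, b)` with `f = a ≫ f' ≫ b`,
i.e. `f = b ∘ f' ∘ a`. -/
def Tw (C : Type u) [Category.{v} C] := Σ (x : C) (y : C), x ⟶ y

instance (C : Type u) [Category.{v} C] : Category (Tw C) where
  Hom f g := {p : (g.1 ⟶ f.1) × (f.2.1 ⟶ g.2.1) // g.2.2 = p.1 ≫ f.2.2 ≫ p.2}
  id f := ⟨(𝟙 _, 𝟙 _), by simp⟩
  comp u v := ⟨(v.1.1 ≫ u.1.1, u.1.2 ≫ v.1.2), by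
    have hu := u.2
    have hv := v.2
    simp only []
    simp only [hv, hu, Category.assoc]⟩
  id_comp u := by apply Subtype.ext; simp
  comp_id u := by apply Subtype.ext; simp
  assoc u v w := by apply Subtype.ext; simp

/-- Extract the pair of natural numbers underlying a morphism in `Tw Bℕ`. -/
def twBNPair {f g : Tw BN} (u : f ⟶ g) : ℕ × ℕ :=
  (Multiplicative.toAdd (show Multiplicative ℕ from u.1.1),
   Multiplicative.toAdd (show Multiplicative ℕ from u.1.2))

/-- Extract the natural number underlying an object of `Tw Bℕ`. -/
def twBNObj (f : Tw BN) : ℕ :=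
  Multiplicative.toAdd (show Multiplicative ℕ from f.2.2)

/-- The type of `k`-simplices of the free simplicial set on `A : Δ_inert^op → Set`:
the explicit formula `X_k = ∑_{α : [k] ↠ [n] active} A_n`. -/
def FD (A : InertCat ᵒᵖ ⥤ Type) (k : ℕ) : Type :=
  Σ n : ℕ, {α : mk k ⟶ mk n // IsActive α} × A.obj (Opposite.op ⟨n⟩)

/-- The action of an active map `g : [k'] → [k]` on the free simplicial set,
given by precomposition on the indexing active maps and the identity on summands. -/
def FDmap (A : InertCat ᵒᵖ ⥤ Type) {k' k : ℕ} (g : mk k' ⟶ mk k) (hg : IsActive g) :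
    FD A k → FD A k' :=
  fun x => ⟨x.1, ⟨g ≫ x.2.1.1, isActive_comp hg x.2.1.2⟩, x.2.2⟩

/-- The map of free simplicial sets induced by a natural transformation. -/
def FDmapNat {A' A : InertCat ᵒᵖ ⥤ Type} (η : A' ⟶ A) (k : ℕ) : FD A' k → FD A k :=
  fun x => ⟨x.1, x.2.1, η.app _ x.2.2⟩

/-- The tuple of successive differences of a map `α : [k] → [n]`. -/
def diff {k n : ℕ} (α : mk k ⟶ mk n) : Fin k → ℕ :=
  fun i => (α.toOrderHom i.succ : ℕ) - (α.toOrderHom i.castSucc : ℕ)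

/-- The set `Act(k)` of active maps out of `[k]` (with arbitrary codomain). -/
def ActFrom (k : ℕ) : Type :=
  Σ n : ℕ, {α : mk k ⟶ mk n // IsActive α}

/-- The difference map `Act(k) → ℕ^k`. -/
def diffMap (k : ℕ) : ActFrom k → (Fin k → ℕ) := fun x => diff x.2.1

/-- The action of `φ : [k'] → [k]` on the `k`-simplices `ℕ^k` of the nerve of
`Bℕ`: the `i`-th entry of the result is the sum of the entries from `φ(i-1)`
to `φ(i) - 1`. -/
def nerveBNAct {k' k : ℕ} (φ : mk k' ⟶ mk k) (x : Fin k → ℕ) : Fin k' → ℕ :=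
  fun i => ∑ j ∈ Finset.Ico ((φ.toOrderHom i.castSucc : ℕ)) ((φ.toOrderHom i.succ : ℕ)),
    (fun t => if h : t < k then x ⟨t, h⟩ else 0) j

/-- The inert map `γᵢ : [nᵢ] → [n]`, `j ↦ α(i) + j` (where `nᵢ = α(i+1) - α(i)`),
appearing in the active-inert factorization of `α ∘ ρᵢ`. -/
def segIncl {k n : ℕ} (α : mk k ⟶ mk n) (i : Fin k) : mk (diff α i) ⟶ mk n :=
  mkHom ⟨fun j => ⟨(α.toOrderHom i.castSucc : ℕ) + (j : ℕ), by
      have hj : (j : ℕ) ≤ diff α i := by have := j.isLt; simp [len_mk] at this; omega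
      have hle : (α.toOrderHom i.castSucc : ℕ) ≤ (α.toOrderHom i.succ : ℕ) :=
        α.toOrderHom.monotone (Fin.castSucc_le_succ i)
      have := (α.toOrderHom i.succ).isLt
      simp only [diff] at hj
      simp [len_mk] at *
      omega⟩,
    fun a b h => by
      simp only [Fin.mk_le_mk]
      have : (a : ℕ) ≤ (b : ℕ) := h
      omega⟩

lemma isInert_segIncl {k n : ℕ} (α : mk k ⟶ mk n) (i : Fin k) :
    IsInert (segIncl α i) := by
  intro t
  show ((α.toOrderHom i.castSucc : ℕ) + (t.succ : ℕ)) =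
    ((α.toOrderHom i.castSucc : ℕ) + (t.castSucc : ℕ)) + 1
  simp
  omega

/-- `γᵢ` as a morphism of `Δ_inert`. -/
def segInclI {k n : ℕ} (α : mk k ⟶ mk n) (i : Fin k) : (⟨diff α i⟩ : InertCat) ⟶ ⟨n⟩ :=
  ⟨segIncl α i, isInert_segIncl α i⟩

/-- The Segal map of the free simplicial set `X = j_!(A)`: it sends the
`α`-summand `A_n` of `X_k` to the tuple of its restrictions along the `γᵢ`. -/
def fdSegalMap (A : InertCat ᵒᵖ ⥤ Type) (k : ℕ) : FD A k → (Fin k → FD A 1) :=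
  fun x i => ⟨diff x.2.1.1 i, ⟨mu (diff x.2.1.1 i), isActive_mu _⟩,
    A.map (segInclI x.2.1.1 i).op x.2.2⟩

/-- Matching (fiber product over `X_0`) condition for a tuple in `(X_1)^k`:
consecutive components agree in `A_0` under top/bottom vertex restrictions. -/
def fdMatching (A : InertCat ᵒᵖ ⥤ Type) (k : ℕ) (t : Fin k → FD A 1) : Prop :=
  ∀ (i : Fin k) (h : (i : ℕ) + 1 < k),
    A.map (topV (t i).1).op ((t i).2.2) =
      A.map (botV (t ⟨(i : ℕ) + 1, h⟩).1).op ((t ⟨(i : ℕ) + 1, h⟩).2.2)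

/-- The restriction map `A_n → ∏ᵢ A_{nᵢ}` along the covering family `{γᵢ}`
associated to an active map `α : [k] → [n]`. -/
def resMap (A : InertCat ᵒᵖ ⥤ Type) {k n : ℕ} (α : mk k ⟶ mk n) :
    A.obj (Opposite.op ⟨n⟩) → ∀ i : Fin k, A.obj (Opposite.op ⟨diff α i⟩) :=
  fun a i => A.map (segInclI α i).op a

/-- Matching (fiber product over `A_0`) condition for a tuple in `∏ᵢ A_{nᵢ}`. -/
def resMatching (A : InertCat ᵒᵖ ⥤ Type) {k n : ℕ} (α : mk k ⟶ mk n)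
    (t : ∀ i : Fin k, A.obj (Opposite.op ⟨diff α i⟩)) : Prop :=
  ∀ (i : Fin k) (h : (i : ℕ) + 1 < k),
    A.map (topV (diff α i)).op (t i) =
      A.map (botV (diff α ⟨(i : ℕ) + 1, h⟩)).op (t ⟨(i : ℕ) + 1, h⟩)

/-- The length functor from the path category of a quiver to `Bℕ`. -/
def lengthFunctor (Q : Type u) [Quiver.{u + 1} Q] : Paths Q ⥤ BN where
  obj _ := SingleObj.star _
  map p := Multiplicative.ofAdd p.length
  map_id _ := rfl
  map_comp {x y z} p q := by
    show Multiplicative.ofAdd (p.comp q).length = _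
    show _ = (Multiplicative.ofAdd q.length) * (Multiplicative.ofAdd p.length)
    rw [← ofAdd_add]
    exact congrArg Multiplicative.ofAdd ((Quiver.Path.length_comp p q).trans (Nat.add_comm _ _))

/-- A functor to `Bℕ` is CULF if every factorization in `(ℕ,+)` of the image of
a morphism `f` lifts uniquely to a factorization of `f`. -/
def IsCULF {C : Type u} [Category.{v} C] (F : C ⥤ BN) : Prop :=
  ∀ {x y : C} (f : x ⟶ y) (a b : Multiplicative ℕ), F.map f = a * b →
    ∃! p : Σ z : C, (x ⟶ z) × (z ⟶ y),
      p.2.1 ≫ p.2.2 = f ∧ F.map p.2.1 = a ∧ F.map p.2.2 = b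

/-- The category `𝕃` of finite linear orders `{1,…,n}` and convex monotone
injections. -/
structure LinOrdCat where
  n : ℕ

/-- A convex monotone injection between finite linear orders. -/
def IsConvexEmb {m n : ℕ} (f : Fin m → Fin n) : Prop :=
  StrictMono f ∧ ∀ (a b : Fin m) (c : Fin n), f a ≤ c → c ≤ f b → ∃ x, f x = c

instance : Category LinOrdCat where
  Hom x y := {f : Fin x.n → Fin y.n // IsConvexEmb f}
  id x := ⟨id, strictMono_id, fun _ _ c _ _ => ⟨c, rfl⟩⟩
  comp f g := ⟨g.1 ∘ f.1, (g.2.1).comp f.2.1, by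
    intro a b c h1 h2
    obtain ⟨w, hw⟩ := g.2.2 (f.1 a) (f.1 b) c h1 h2
    have ha : f.1 a ≤ w := by
      rw [← (g.2.1).le_iff_le]; rw [hw]; exact h1
    have hb : w ≤ f.1 b := by
      rw [← (g.2.1).le_iff_le]; rw [hw]; exact h2
    obtain ⟨v, hv⟩ := f.2.2 a b w ha hb
    exact ⟨v, by simp [Function.comp, hv, hw]⟩⟩
  id_comp f := by apply Subtype.ext; rfl
  comp_id f := by apply Subtype.ext; rfl
  assoc f g h := by apply Subtype.ext; rfl


/-! ### Auxiliary development for the proof -/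

/-- Padding of a tuple `Fin k → ℕ` to a function `ℕ → ℕ`. -/
def pad {k : ℕ} (x : Fin k → ℕ) (t : ℕ) : ℕ := if h : t < k then x ⟨t, h⟩ else 0

/-- Partial sums of a tuple. -/
def psum {k : ℕ} (x : Fin k → ℕ) (j : ℕ) : ℕ := ∑ t ∈ Finset.range j, pad x t

lemma psum_succ {k : ℕ} (x : Fin k → ℕ) (j : ℕ) :
    psum x (j + 1) = psum x j + pad x j := Finset.sum_range_succ _ _

lemma psum_mono {k : ℕ} (x : Fin k → ℕ) {a b : ℕ} (h : a ≤ b) : psum x a ≤ psum x b :=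
  Finset.sum_le_sum_of_subset (Finset.range_subset_range.2 h)

/-- The total sum of a tuple. -/
def total {k : ℕ} (x : Fin k → ℕ) : ℕ := psum x k

/-- The active map `[k] → [total x]` with successive differences `x`. -/
def fromTuple {k : ℕ} (x : Fin k → ℕ) : mk k ⟶ mk (total x) :=
  mkHom ⟨fun j => ⟨psum x (j : ℕ), by
      have hj : (j : ℕ) ≤ k := by
        have := j.isLt
        omega
      have := psum_mono x hj
      show psum x (j : ℕ) < total x + 1
      simp only [total] at *
      omega⟩,
    fun a b h => by
      simp only [Fin.mk_le_mk]
      exact psum_mono x h⟩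

lemma fromTuple_app {k : ℕ} (x : Fin k → ℕ) (j : Fin (k + 1)) :
    ((fromTuple x).toOrderHom j : ℕ) = psum x (j : ℕ) := rfl

lemma isActive_fromTuple {k : ℕ} (x : Fin k → ℕ) : IsActive (fromTuple x) := by
  constructor
  · ext
    show psum x ((0 : Fin (k+1)) : ℕ) = ((0 : Fin (total x + 1)) : ℕ)
    simp [psum]
  · ext
    show psum x ((Fin.last k : Fin (k+1)) : ℕ) = ((Fin.last (total x)) : ℕ)
    simp [Fin.last, total]

lemma diff_fromTuple {k : ℕ} (x : Fin k → ℕ) : diff (fromTuple x) = x := by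
  funext i
  have h1 : ((fromTuple x).toOrderHom i.succ : ℕ) = psum x ((i : ℕ) + 1) := rfl
  have h2 : ((fromTuple x).toOrderHom i.castSucc : ℕ) = psum x (i : ℕ) := rfl
  have hpad : pad x (i : ℕ) = x i := by simp [pad, i.isLt]
  simp only [diff, h1, h2, psum_succ, hpad]
  omega

lemma mono_step {k n : ℕ} (α : mk k ⟶ mk n) (j : ℕ) (hj : j < k) :
    (α.toOrderHom ⟨j + 1, by first | omega | (simp only [len_mk]; omega)⟩ : ℕ) =
      (α.toOrderHom ⟨j, by first | omega | (simp only [len_mk]; omega)⟩ : ℕ) + diff α ⟨j, hj⟩ := by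
  have hc : (⟨j, hj⟩ : Fin k).castSucc = ⟨j, by first | omega | (simp only [len_mk]; omega)⟩ := by ext; simp
  have hs : (⟨j, hj⟩ : Fin k).succ = ⟨j + 1, by first | omega | (simp only [len_mk]; omega)⟩ := by ext; simp
  have hle : α.toOrderHom (⟨j, hj⟩ : Fin k).castSucc ≤ α.toOrderHom (⟨j, hj⟩ : Fin k).succ :=
    α.toOrderHom.monotone (Fin.castSucc_le_succ _)
  simp only [diff] at *
  rw [← hc, ← hs]
  omega

lemma psum_diff {k n : ℕ} (α : mk k ⟶ mk n) (j : ℕ) (hj : j ≤ k) :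
    (α.toOrderHom ⟨0, by first | omega | (simp only [len_mk]; omega)⟩ : ℕ) + psum (diff α) j = (α.toOrderHom ⟨j, by first | omega | (simp only [len_mk]; omega)⟩ : ℕ) := by
  induction j with
  | zero => simp [psum]
  | succ j ih =>
    have hj' : j < k := by first | omega | (simp only [len_mk]; omega)
    have hpad : pad (diff α) j = diff α ⟨j, hj'⟩ := by simp [pad, hj']
    rw [psum_succ, hpad, mono_step α j hj', ← ih (by first | omega | (simp only [len_mk]; omega))]
    omega

lemma active_app {k n : ℕ} (α : mk k ⟶ mk n) (hα : IsActive α) (j : ℕ) (hj : j ≤ k) :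
    (α.toOrderHom ⟨j, by first | omega | (simp only [len_mk]; omega)⟩ : ℕ) = psum (diff α) j := by
  have h0 : (α.toOrderHom ⟨0, by first | omega | (simp only [len_mk]; omega)⟩ : ℕ) = 0 := by
    have := hα.1
    have e : (⟨0, by first | omega | (simp only [len_mk]; omega)⟩ : Fin (k + 1)) = 0 := rfl
    rw [e, this]
    rfl
  have := psum_diff α j hj
  omega

lemma active_app' {k n : ℕ} (α : mk k ⟶ mk n) (hα : IsActive α) (j : Fin (k + 1)) :
    (α.toOrderHom j : ℕ) = psum (diff α) (j : ℕ) := by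
  have hj : (j : ℕ) ≤ k := by omega
  have e : (⟨(j : ℕ), by first | omega | (simp only [len_mk]; omega)⟩ : Fin (k + 1)) = j := by
    ext; rfl
  have h := active_app α hα (j : ℕ) hj
  rw [e] at h
  exact h

lemma active_total {k n : ℕ} (α : mk k ⟶ mk n) (hα : IsActive α) :
    n = total (diff α) := by
  have h := active_app' α hα (Fin.last (mk k).len)
  rw [hα.2] at h
  simp only [Fin.val_last, len_mk] at h
  simpa [total] using h

lemma diffMap_bijective (k : ℕ) : Function.Bijective (diffMap k) := by
  constructor
  · rintro ⟨n₁, α₁, h₁⟩ ⟨n₂, α₂, h₂⟩ h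
    have hd : diff α₁ = diff α₂ := h
    have hn : n₁ = n₂ := by
      rw [active_total α₁ h₁, active_total α₂ h₂, hd]
    subst hn
    have hα : α₁ = α₂ := by
      apply SimplexCategory.Hom.ext
      apply OrderHom.ext
      funext j
      apply Fin.ext
      have hj : (j : ℕ) ≤ k := by
        have := j.isLt
        simp only [len_mk] at this
        omega
      have e : j = (⟨(j : ℕ), by omega⟩ : Fin (k + 1)) := by ext; rfl
      rw [e]
      rw [active_app α₁ h₁ (j : ℕ) hj, active_app α₂ h₂ (j : ℕ) hj, hd]
    subst hα
    rfl
  · intro x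
    exact ⟨⟨total x, fromTuple x, isActive_fromTuple x⟩, diff_fromTuple x⟩


/-- The string of composable arrows in `Bℕ` associated to a map `f` of `Δ`:
the arrow from `i` to `j` is `f j - f i`. -/
def cArr {m n : ℕ} (f : mk m ⟶ mk n) : ComposableArrows BN m where
  obj _ := SingleObj.star _
  map {i j} _ := Multiplicative.ofAdd ((f.toOrderHom j : ℕ) - (f.toOrderHom i : ℕ))
  map_id i := by
    show Multiplicative.ofAdd _ = (1 : Multiplicative ℕ)
    simp
  map_comp {i j l} u v := by
    have h1 : (f.toOrderHom i : ℕ) ≤ (f.toOrderHom j : ℕ) := f.toOrderHom.monotone (leOfHom u)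
    have h2 : (f.toOrderHom j : ℕ) ≤ (f.toOrderHom l : ℕ) := f.toOrderHom.monotone (leOfHom v)
    show Multiplicative.ofAdd _ = Multiplicative.ofAdd _ * Multiplicative.ofAdd _
    rw [← ofAdd_add]
    congr 1
    omega

lemma cArr_map_succ {m n : ℕ} (f : mk m ⟶ mk n) (i : ℕ) (hi : i < m) :
    (cArr f).map' i (i + 1) (by omega) (by omega) =
      Multiplicative.ofAdd ((f.toOrderHom ⟨i + 1, by first | omega | (simp only [len_mk]; omega)⟩ : ℕ) -
        (f.toOrderHom ⟨i, by first | omega | (simp only [len_mk]; omega)⟩ : ℕ)) := rfl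

lemma nerve_map_cArr {m n p : ℕ} (f : mk m ⟶ mk n) (g : mk n ⟶ mk p) :
    (nerve BN).map f.op (cArr g) = cArr (f ≫ g) := by
  refine ComposableArrows.ext (fun i => rfl) (fun i hi => ?_)
  simp only [eqToHom_refl, Category.comp_id, Category.id_comp]
  rfl

lemma cArr_of_inert {m n : ℕ} (g : mk m ⟶ mk n) (hg : IsInert g) :
    cArr g = cArr (𝟙 (mk m)) := by
  refine ComposableArrows.ext (fun i => rfl) (fun i hi => ?_)
  simp only [eqToHom_refl, Category.comp_id, Category.id_comp]
  rw [cArr_map_succ g i hi, cArr_map_succ (𝟙 (mk m)) i hi]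
  have h := hg ⟨i, hi⟩
  have e1 : (g.toOrderHom ⟨i + 1, by first | omega | (simp only [len_mk]; omega)⟩ : ℕ)
      = (g.toOrderHom ⟨i, by first | omega | (simp only [len_mk]; omega)⟩ : ℕ) + 1 := by
    have ec : (⟨i, hi⟩ : Fin m).castSucc = ⟨i, by first | omega | (simp only [len_mk]; omega)⟩ := by ext; rfl
    have es : (⟨i, hi⟩ : Fin m).succ = ⟨i + 1, by first | omega | (simp only [len_mk]; omega)⟩ := by ext; rfl
    rw [← ec, ← es]
    exact h
  have e2 : ((Hom.toOrderHom (𝟙 (mk m))) ⟨i + 1, by first | omega | (simp only [len_mk]; omega)⟩ : ℕ) = i + 1 := rfl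
  have e3 : ((Hom.toOrderHom (𝟙 (mk m))) ⟨i, by first | omega | (simp only [len_mk]; omega)⟩ : ℕ) = i := rfl
  rw [e2, e3, e1]
  congr 1
  omega


/-- The unit for exhibiting the nerve of `Bℕ` as a left Kan extension. -/
def eta : (Functor.const (InertCat ᵒᵖ)).obj PUnit ⟶ jF.op ⋙ nerve BN where
  app X := TypeCat.ofHom fun _ => cArr (𝟙 (mk X.unop.n))
  naturality X Y h := by
    ext u
    show cArr (𝟙 (mk Y.unop.n)) = (nerve BN).map (jF.op.map h) (cArr (𝟙 (mk X.unop.n)))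
    have e : jF.op.map h = (h.unop.1).op := rfl
    exact ((nerve_map_cArr h.unop.1 (𝟙 _)).trans (by rw [Category.comp_id, cArr_of_inert _ h.unop.2])).symm

/-- The inert part of the active-inert factorization of `f`. -/
def inertPart {k n : ℕ} (f : mk k ⟶ mk n) : mk (total (diff f)) ⟶ mk n :=
  mkHom ⟨fun j => ⟨(f.toOrderHom ⟨0, by first | omega | (simp only [len_mk]; omega)⟩ : ℕ) + (j : ℕ), by
      have hj : (j : ℕ) ≤ total (diff f) := by
        have := j.isLt
        omega
      have h := psum_diff f k (le_refl k)
      have hlt := (f.toOrderHom ⟨k, by first | omega | (simp only [len_mk]; omega)⟩).isLt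
      simp only [len_mk] at hlt ⊢
      simp only [total] at hj
      omega⟩,
    fun a b hab => by
      simp only [Fin.mk_le_mk]
      have : (a : ℕ) ≤ (b : ℕ) := hab
      omega⟩

lemma isInert_inertPart {k n : ℕ} (f : mk k ⟶ mk n) : IsInert (inertPart f) := by
  intro t
  show ((f.toOrderHom ⟨0, by first | omega | (simp only [len_mk]; omega)⟩ : ℕ) + ((t.succ : Fin _) : ℕ)) =
    ((f.toOrderHom ⟨0, by first | omega | (simp only [len_mk]; omega)⟩ : ℕ) + ((t.castSucc : Fin _) : ℕ)) + 1
  simp only [Fin.val_succ, Fin.coe_castSucc]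
  omega

lemma inertPart_factor {k n : ℕ} (f : mk k ⟶ mk n) :
    fromTuple (diff f) ≫ inertPart f = f := by
  apply SimplexCategory.Hom.ext
  apply OrderHom.ext
  funext j
  apply Fin.ext
  show (f.toOrderHom ⟨0, by first | omega | (simp only [len_mk]; omega)⟩ : ℕ) + psum (diff f) (j : ℕ) = (f.toOrderHom j : ℕ)
  have hj : (j : ℕ) ≤ k := by
    have := j.isLt
    simp only [len_mk] at this
    omega
  have h := psum_diff f (j : ℕ) hj
  have e : (⟨(j : ℕ), by first | omega | (simp only [len_mk]; omega)⟩ : Fin (k + 1)) = j := by ext; rfl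
  rw [e] at h
  exact h

/-- The tuple of arrows of a string of composable arrows in `Bℕ`. -/
def toTuple {k : ℕ} (F : ComposableArrows BN k) : Fin k → ℕ :=
  fun i => Multiplicative.toAdd
    (show Multiplicative ℕ from F.map' (i : ℕ) ((i : ℕ) + 1) (by omega) (by omega))

lemma toTuple_cArr {k n : ℕ} (f : mk k ⟶ mk n) : toTuple (cArr f) = diff f := by
  funext i
  show Multiplicative.toAdd
    (show Multiplicative ℕ from (cArr f).map' (i : ℕ) ((i : ℕ) + 1) (by omega) (by omega)) = _
  rw [cArr_map_succ f (i : ℕ) i.isLt]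
  simp only [toAdd_ofAdd]
  have ec : (⟨(i : ℕ), by first | omega | (simp only [len_mk]; omega)⟩ : Fin (k + 1)) = i.castSucc := by ext; rfl
  have es : (⟨(i : ℕ) + 1, by first | omega | (simp only [len_mk]; omega)⟩ : Fin (k + 1)) = i.succ := by ext; rfl
  rw [ec, es]
  rfl

lemma cArr_toTuple {k : ℕ} (F : ComposableArrows BN k) :
    cArr (fromTuple (toTuple F)) = F := by
  refine ComposableArrows.ext (fun i => rfl) (fun i hi => ?_)
  simp only [eqToHom_refl, Category.comp_id, Category.id_comp]
  rw [cArr_map_succ (fromTuple (toTuple F)) i hi]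
  have e1 : ((fromTuple (toTuple F)).toOrderHom ⟨i + 1, by first | omega | (simp only [len_mk]; omega)⟩ : ℕ) = psum (toTuple F) (i + 1) := rfl
  have e2 : ((fromTuple (toTuple F)).toOrderHom ⟨i, by first | omega | (simp only [len_mk]; omega)⟩ : ℕ) = psum (toTuple F) i := rfl
  rw [e1, e2, psum_succ]
  have hpad : pad (toTuple F) i = toTuple F ⟨i, hi⟩ := by simp [pad, hi]
  rw [hpad]
  have : psum (toTuple F) i + toTuple F ⟨i, hi⟩ - psum (toTuple F) i = toTuple F ⟨i, hi⟩ := by omega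
  rw [this]
  show Multiplicative.ofAdd (Multiplicative.toAdd _) = _
  rw [ofAdd_toAdd]

/-- The canonical object of the costructured arrow category attached to a tuple. -/
def actObj (Y : SimplexCategoryᵒᵖ) (x : Fin (Y.unop.len) → ℕ) : CostructuredArrow jF.op Y :=
  CostructuredArrow.mk (S := jF.op) (Y := Opposite.op (⟨total x⟩ : InertCat))
    ((fromTuple x).op)


lemma leg_eq {Y : SimplexCategoryᵒᵖ}
    (s : Limits.Cocone (CostructuredArrow.proj jF.op Y ⋙ (Functor.const (InertCat ᵒᵖ)).obj PUnit))
    {g g' : CostructuredArrow jF.op Y} (φ : g ⟶ g') : s.ι.app g = s.ι.app g' := by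
  have h := s.ι.naturality φ
  simp only [Functor.comp_map, Functor.const_obj_map, Category.comp_id, Category.id_comp] at h
  exact h.symm

/-- The underlying map of a costructured arrow over `Y`. -/
def gMap {Y : SimplexCategoryᵒᵖ} (g : CostructuredArrow jF.op Y) :
    mk (Y.unop.len) ⟶ mk (g.left.unop.n) := g.hom.unop

/-- The canonical morphism from a costructured arrow to the one given
by the active part of its factorization. -/
def toActO {Y : SimplexCategoryᵒᵖ} (g : CostructuredArrow jF.op Y) :
    g ⟶ actObj Y (diff (gMap g)) :=
  CostructuredArrow.homMk
    (Quiver.Hom.op (⟨inertPart (gMap g), isInert_inertPart _⟩ :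
      (⟨total (diff (gMap g))⟩ : InertCat) ⟶ g.left.unop))
    (by
      show (inertPart (gMap g)).op ≫ (fromTuple (diff (gMap g))).op = g.hom
      rw [← op_comp, inertPart_factor]
      rfl)

/-- The cocone at `Y` is a colimit: the nerve of `Bℕ` is a pointwise left Kan
extension of the terminal presheaf along `j`. -/
def isColimitAt (Y : SimplexCategoryᵒᵖ) :
    Limits.IsColimit ((Functor.LeftExtension.mk (nerve BN) eta).coconeAt Y) where
  desc s := TypeCat.ofHom fun F => s.ι.app (actObj Y (toTuple F)) PUnit.unit
  fac s g := by
    have e : (nerve BN).map g.hom (cArr (𝟙 (mk g.left.unop.n))) = cArr (gMap g) := by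
      have h2 := nerve_map_cArr (m := Y.unop.len) (n := g.left.unop.n) (gMap g)
        (𝟙 (mk g.left.unop.n))
      rw [Category.comp_id] at h2
      exact h2
    ext u
    show s.ι.app (actObj Y (toTuple ((nerve BN).map g.hom
      (cArr (𝟙 (mk g.left.unop.n)))))) PUnit.unit = s.ι.app g u
    rw [e, toTuple_cArr, ← leg_eq s (toActO g)]
    rfl
  uniq s m hm := by
    ext F
    have h := ConcreteCategory.congr_hom (hm (actObj Y (toTuple F))) PUnit.unit
    have e : (nerve BN).map ((fromTuple (toTuple F)).op)
        (cArr (𝟙 (mk (total (toTuple F))))) = F := by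
      have h2 := nerve_map_cArr (m := Y.unop.len) (n := total (toTuple F))
        (fromTuple (toTuple F)) (𝟙 (mk (total (toTuple F))))
      rw [Category.comp_id] at h2
      rw [h2]
      exact cArr_toTuple F
    show m F = s.ι.app (actObj Y (toTuple F)) PUnit.unit
    refine Eq.trans ?_ h
    exact congrArg m e.symm

/-- The left Kan extension along `j : Δ_inert → Δ` of the
terminal presheaf is the nerve of `Bℕ`; in particular `j_!(1)_k ≅ ℕ^k` via
successive differences. -/
theorem lan_terminal_iso_nerve_BN :
    Nonempty (((jF.op).lan).obj ((Functor.const (InertCat ᵒᵖ)).obj PUnit) ≅ nerve BN) ∧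
    (∀ k : ℕ, Function.Bijective (diffMap k)) := by
  constructor
  · have hpw : (Functor.LeftExtension.mk (nerve BN) eta).IsPointwiseLeftKanExtension :=
      fun Y => isColimitAt Y
    haveI : (nerve BN).IsLeftKanExtension eta := hpw.isLeftKanExtension
    exact ⟨Functor.leftKanExtensionUnique _ ((jF.op).lanUnit.app _) _ eta⟩
  · exact diffMap_bijective

end FreeDecompPaper
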